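/- Let M > 0, δ_S > 0, y₀ ∈ (0, 1/4), and α > 0. Suppose f ∈ H¹(y₀,1) and constants X, G satisfy: −(δ_S/(2M))X² ≤ −Mδ_S(∫_{y₀}^1 f dy)² + Cδ_S²∫_{y₀}^1 f² dy, and the diffusion term satisfies D ≥ 2αδ_S(1−θ)(∫_{y₀}^1 f² dy − (1/(1−y₀))(∫_{y₀}^1 f dy)²) for some small θ ∈ (0, 1/8). If M = (3/2)α and B − G₂ ≤ (αδ_S + Cδ_S^{3/2})∫_{y₀}^1 f² dy, then −(δ_S/(2M))X² + (B − G₂) − (5/8)D ≤ −(α/16)δ_S ∫_{y₀}^1 f² dy, provided δ_S is sufficiently small (depending on C, α, θ). -/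

import Mathlib

set_option maxHeartbeats 800000


open MeasureTheory

/-- Abstract leading-order estimate of the a-contraction argument: with `M = (3/2)α`
and `y₀ < 1/4`, the negative square of the shift speed, the Poincaré-type diffusion
bound, and the bad term combine into a strictly negative multiple of `δ_S ∫ f²`. -/
theorem abstract_leading_order_estimate (C α θ : ℝ) (hC : 0 ≤ C) (hα : 0 < α)
    (hθ0 : 0 < θ) (hθ1 : θ < 1/8) :
    ∃ δ1 > 0, ∀ δS : ℝ, 0 < δS → δS < δ1 →
      ∀ (M y0 X D B G2 : ℝ) (f : ℝ → ℝ),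
        M = (3/2) * α → 0 < y0 → y0 < 1/4 →
        IntegrableOn f (Set.Ioc y0 1) →
        IntegrableOn (fun y => f y ^ 2) (Set.Ioc y0 1) →
        -(δS / (2 * M)) * X ^ 2
            ≤ -M * δS * (∫ y in y0..1, f y) ^ 2 + C * δS ^ 2 * ∫ y in y0..1, f y ^ 2 →
        2 * α * δS * (1 - θ) * ((∫ y in y0..1, f y ^ 2)
            - (1 / (1 - y0)) * (∫ y in y0..1, f y) ^ 2) ≤ D →
        B - G2 ≤ (α * δS + C * δS ^ ((3:ℝ)/2)) * ∫ y in y0..1, f y ^ 2 →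
        -(δS / (2 * M)) * X ^ 2 + (B - G2) - (5/8) * D
          ≤ -(α / 16) * δS * ∫ y in y0..1, f y ^ 2 := by
  refine ⟨min 1 ((α / (64 * (C + 1))) ^ 2), by positivity, ?_⟩
  intro δS hδS hδS1 M y0 X D B G2 f hM hy0 hy0' hfi hf2i h1 h2 h3
  set a := ∫ y in y0..1, f y with ha
  set b := ∫ y in y0..1, f y ^ 2 with hb
  have hy01 : y0 ≤ 1 := by linarith
  have hb0 : 0 ≤ b :=
    intervalIntegral.integral_nonneg hy01 (fun u _ => sq_nonneg _)
  have hL : (0:ℝ) < 1 - y0 := by linarith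
  have hfI : IntervalIntegrable f volume y0 1 :=
    (intervalIntegrable_iff_integrableOn_Ioc_of_le hy01).2 hfi
  have hf2I : IntervalIntegrable (fun y => f y ^ 2) volume y0 1 :=
    (intervalIntegrable_iff_integrableOn_Ioc_of_le hy01).2 hf2i
  -- Cauchy–Schwarz on the interval
  have hCS : a ^ 2 ≤ (1 - y0) * b := by
    set t := a / (1 - y0) with ht
    have key : 0 ≤ ∫ y in y0..1, (f y - t) ^ 2 :=
      intervalIntegral.integral_nonneg hy01 (fun u _ => sq_nonneg _)
    have expand : ∫ y in y0..1, (f y - t) ^ 2 = b - 2 * t * a + t ^ 2 * (1 - y0) := by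
      have heq : ∀ y : ℝ, (f y - t) ^ 2 = (f y ^ 2 - (2 * t) * f y) + t ^ 2 := by
        intro y; ring
      simp_rw [heq]
      rw [intervalIntegral.integral_add (hf2I.sub (hfI.const_mul _))
            (intervalIntegrable_const),
          intervalIntegral.integral_sub hf2I (hfI.const_mul _),
          intervalIntegral.integral_const_mul, intervalIntegral.integral_const]
      simp only [smul_eq_mul, ← ha, ← hb]
      ring
    rw [expand] at key
    have h0 : t * (1 - y0) = a := by rw [ht]; field_simp
    nlinarith [mul_nonneg hL.le key, h0, sq_nonneg (t * (1 - y0) - a)]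
  -- smallness of δS
  have hδ1 : δS ≤ 1 := le_of_lt (lt_of_lt_of_le hδS1 (min_le_left _ _))
  set s := Real.sqrt δS with hsdef
  have hs0 : 0 < s := Real.sqrt_pos.2 hδS
  have hs2 : s ^ 2 = δS := Real.sq_sqrt hδS.le
  have hs1 : s ≤ 1 := by rw [hsdef]; exact Real.sqrt_le_one.2 hδ1
  have hsmalls : s < α / (64 * (C + 1)) := by
    have h' : δS < (α / (64 * (C + 1))) ^ 2 := lt_of_lt_of_le hδS1 (min_le_right _ _)
    have := Real.sqrt_lt_sqrt hδS.le h'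
    rwa [Real.sqrt_sq (by positivity)] at this
  have hCbound : C * δS + C * s ≤ α / 32 := by
    have h1' : C * s ≤ α / 64 := by
      have : (C + 1) * s ≤ (C + 1) * (α / (64 * (C + 1))) := by
        apply mul_le_mul_of_nonneg_left hsmalls.le (by linarith)
      have heq : (C + 1) * (α / (64 * (C + 1))) = α / 64 := by
        field_simp
      nlinarith [mul_nonneg hC hs0.le]
    have h2' : C * δS ≤ C * s := by
      have : δS ≤ s := by nlinarith
      exact mul_le_mul_of_nonneg_left this hC
    linarith
  have h32 : δS ^ ((3:ℝ)/2) = δS * s := by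
    rw [show (3:ℝ)/2 = 1 + 1/2 by norm_num, Real.rpow_add hδS, Real.rpow_one,
      hsdef, Real.sqrt_eq_rpow]
  rw [h32] at h3
  -- combine
  have h2' : (5/4) * α * δS * (1 - θ) * (b - a ^ 2 / (1 - y0)) ≤ (5/8) * D := by
    have e : b - a ^ 2 / (1 - y0) = b - 1 / (1 - y0) * a ^ 2 := by ring
    rw [e]; linarith
  have hP : 0 ≤ b - a ^ 2 / (1 - y0) := by
    rw [sub_nonneg, div_le_iff₀ hL]
    nlinarith
  have haeq : a ^ 2 = (1 - y0) * (b - (b - a ^ 2 / (1 - y0))) := by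
    field_simp; ring
  set P := b - a ^ 2 / (1 - y0) with hPdef
  have hPb : P ≤ b := by
    have : 0 ≤ a ^ 2 / (1 - y0) := div_nonneg (sq_nonneg _) hL.le
    simp [hPdef]; linarith
  have hA : 0 ≤ δS * b := mul_nonneg hδS.le hb0
  have hA2 : (C * δS + C * s) * (δS * b) ≤ (α / 32) * (δS * b) :=
    mul_le_mul_of_nonneg_right hCbound hA
  have key : -M * δS * a ^ 2 + C * δS ^ 2 * b + (α * δS + C * (δS * s)) * b
      - (5/4) * α * δS * (1 - θ) * P ≤ -(α / 16) * δS * b := by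
    rw [hM, haeq]
    rcases le_or_gt ((3:ℝ)/2 * (1 - y0)) ((5:ℝ)/4 * (1 - θ)) with hc | hc
    · have hA1 : 0 ≤ (δS * P) * ((5:ℝ)/4 * (1 - θ) - (3:ℝ)/2 * (1 - y0)) :=
        mul_nonneg (mul_nonneg hδS.le hP) (by linarith)
      have hA3 : (9:ℝ)/8 * (δS * b) ≤ (3:ℝ)/2 * (1 - y0) * (δS * b) :=
        mul_le_mul_of_nonneg_right (by linarith) hA
      nlinarith [mul_nonneg hα.le hA1, mul_nonneg hα.le hA,
        mul_le_mul_of_nonneg_left hA3 hα.le, mul_le_mul_of_nonneg_left hA2 hα.le]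
    · have hA1 : (δS * P) * ((3:ℝ)/2 * (1 - y0) - (5:ℝ)/4 * (1 - θ))
          ≤ (δS * b) * ((3:ℝ)/2 * (1 - y0) - (5:ℝ)/4 * (1 - θ)) :=
        mul_le_mul_of_nonneg_right
          (mul_le_mul_of_nonneg_left hPb hδS.le) (by linarith)
      have hA3 : (35:ℝ)/32 * (δS * b) ≤ (5:ℝ)/4 * (1 - θ) * (δS * b) :=
        mul_le_mul_of_nonneg_right (by linarith) hA
      nlinarith [mul_le_mul_of_nonneg_left hA1 hα.le, mul_nonneg hα.le hA,
        mul_le_mul_of_nonneg_left hA3 hα.le, mul_le_mul_of_nonneg_left hA2 hα.le]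
  linarith [h1, h3, h2', key]
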